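/- arXiv:2008.12235 — 2 statements merged into one kernel-verified Lean document; each statement's English description precedes it below -/
import Mathlib

section
/- Facility-closing decreases the potential: let s be an assignment in which every agent is stable ignoring facility costs, and let f_k be an open facility with c(f_k) > Σ_{i: s_i = f_k} Q_i(s). Let s' be obtained from s by letting every agent i with s_i = f_k simultaneously switch to nBR_i(s) (which does not use f_k and uses no facility closed in s). Then Φ(s') < Φ(s), where Φ(s) = Σ_{open f} c(f) + Σ_i cc(i,s_i) + Σ_{(i,j): s_i≠s_j} dc(i,j). -/
open Finset
open scoped Classical

variable {A F : Type*}

/-- Agents `i` and `j` are connected in assignment `s` if they use a common facility.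
(Two agents both at `none` are *not* connected, per the paper's convention.) -/
def conn (s : A → Option F) (i j : A) : Prop :=
  ∃ f, s i = some f ∧ s j = some f

/-- Agent `i`'s cost without facility prices: connection cost plus disconnection costs. -/
noncomputable def ct [Fintype A] (cc : A → Option F → ℝ) (dc : A → A → ℝ)
    (s : A → Option F) (i : A) : ℝ :=
  cc i (s i) + ∑ j ∈ Finset.univ.filter (fun j => j ≠ i ∧ ¬ conn s i j), dc i j

/-- The potential function Φ̃: total connection cost plus disconnection cost of each
unordered disconnected pair counted once (hence the factor 1/2 on the double sum). -/
noncomputable def Phi0 [Fintype A] (cc : A → Option F → ℝ) (dc : A → A → ℝ)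
    (s : A → Option F) : ℝ :=
  (∑ i, cc i (s i))
    + (1 / 2) * ∑ i, ∑ j ∈ Finset.univ.filter (fun j => j ≠ i ∧ ¬ conn s i j), dc i j

/-- Social cost with zero facility costs: each disconnected pair is counted twice. -/
noncomputable def soc [Fintype A] (cc : A → Option F → ℝ) (dc : A → A → ℝ)
    (s : A → Option F) : ℝ :=
  (∑ i, cc i (s i))
    + ∑ i, ∑ j ∈ Finset.univ.filter (fun j => j ≠ i ∧ ¬ conn s i j), dc i j

/-- Total opening cost of the facilities open (used by some agent) in `s`. -/
noncomputable def fcost [Fintype F] (fc : F → ℝ) (s : A → Option F) : ℝ :=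
  ∑ f ∈ Finset.univ.filter (fun f => ∃ i, s i = some f), fc f

/-- The potential Φ with facility costs: total opening cost of open facilities plus Φ̃. -/
noncomputable def PhiC [Fintype A] [Fintype F] (fc : F → ℝ) (cc : A → Option F → ℝ)
    (dc : A → A → ℝ) (s : A → Option F) : ℝ :=
  fcost fc s + Phi0 cc dc s

/-- Total social cost: facility opening costs plus connection costs plus each
disconnected pair counted twice. -/
noncomputable def socC [Fintype A] [Fintype F] (fc : F → ℝ) (cc : A → Option F → ℝ)
    (dc : A → A → ℝ) (s : A → Option F) : ℝ :=
  fcost fc s + soc cc dc s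


noncomputable def Dd (dc : A → A → ℝ) (σ : A → Option F) (i j : A) : ℝ :=
  if j ≠ i ∧ ¬ conn σ i j then dc i j else 0

lemma conn_comm {s : A → Option F} {i j : A} : conn s i j ↔ conn s j i :=
  ⟨fun ⟨f, h1, h2⟩ => ⟨f, h2, h1⟩, fun ⟨f, h1, h2⟩ => ⟨f, h2, h1⟩⟩

lemma Dd_symm (dc : A → A → ℝ) (hsym : ∀ i j, dc i j = dc j i) (σ : A → Option F)
    (i j : A) : Dd dc σ i j = Dd dc σ j i := by
  unfold Dd
  rw [hsym i j]
  exact if_congr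
    ⟨fun ⟨h1, h2⟩ => ⟨fun h => h1 h.symm, fun hc => h2 (conn_comm.mpr hc)⟩,
     fun ⟨h1, h2⟩ => ⟨fun h => h1 h.symm, fun hc => h2 (conn_comm.mpr hc)⟩⟩ rfl rfl

lemma Dd_le (dc : A → A → ℝ) (hdc : ∀ i j, 0 ≤ dc i j) (σ : A → Option F)
    (i j : A) : Dd dc σ i j ≤ dc i j := by
  unfold Dd; split_ifs
  · exact le_refl _
  · exact hdc i j


lemma Dd_of_conn (dc : A → A → ℝ) (σ : A → Option F) {i j : A} (h : conn σ i j) :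
    Dd dc σ i j = 0 := by
  unfold Dd
  rw [if_neg]
  exact fun hh => hh.2 h

lemma Dd_of_not_conn (dc : A → A → ℝ) (σ : A → Option F) {i j : A} (hij : j ≠ i)
    (h : ¬ conn σ i j) : Dd dc σ i j = dc i j := by
  unfold Dd
  rw [if_pos ⟨hij, h⟩]

lemma Dd_congr (dc : A → A → ℝ) {σ τ : A → Option F} (i j : A)
    (h : conn σ i j ↔ conn τ i j) : Dd dc σ i j = Dd dc τ i j := by
  unfold Dd
  split_ifs <;> first | rfl | tauto

lemma ct_eq [Fintype A] (cc : A → Option F → ℝ) (dc : A → A → ℝ)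
    (σ : A → Option F) (i : A) :
    ct cc dc σ i = cc i (σ i) + ∑ j, Dd dc σ i j := by
  unfold ct Dd
  rw [Finset.sum_filter]

lemma Phi0_eq [Fintype A] (cc : A → Option F → ℝ) (dc : A → A → ℝ)
    (σ : A → Option F) :
    Phi0 cc dc σ = (∑ i, cc i (σ i)) + (1 / 2) * ∑ i, ∑ j, Dd dc σ i j := by
  unfold Phi0 Dd
  simp only [Finset.sum_filter]


lemma fcost_close [Fintype F] (fc : F → ℝ) (hfc : ∀ f, 0 ≤ fc f)
    (s t : A → Option F) (fk : F) (hfk : ∃ i, s i = some fk)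
    (hsub : ∀ f, (∃ i, t i = some f) → f ≠ fk ∧ (∃ i, s i = some f)) :
    fcost fc t ≤ fcost fc s - fc fk := by
  unfold fcost
  have hfk_mem : fk ∈ Finset.univ.filter (fun f => ∃ i, s i = some f) := by
    simp only [Finset.mem_filter, Finset.mem_univ, true_and]; exact hfk
  have h1 : ∑ f ∈ Finset.univ.filter (fun f => ∃ i, t i = some f), fc f ≤
      ∑ f ∈ (Finset.univ.filter (fun f => ∃ i, s i = some f)).erase fk, fc f := by
    apply Finset.sum_le_sum_of_subset_of_nonneg _ (fun f _ _ => hfc f)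
    intro f hf
    simp only [Finset.mem_filter, Finset.mem_univ, true_and] at hf
    rw [Finset.mem_erase]
    simp only [Finset.mem_filter, Finset.mem_univ, true_and]
    exact hsub f hf
  have h2 : fc fk + ∑ f ∈ (Finset.univ.filter
        (fun f => ∃ i, s i = some f)).erase fk, fc f
      = ∑ f ∈ Finset.univ.filter (fun f => ∃ i, s i = some f), fc f :=
    Finset.add_sum_erase _ _ hfk_mem
  linarith

/-- closing a facility `fk` that cannot be paid for decreases the potential.
Suppose every agent is stable ignoring facility costs, each `nBR i` is a best alternative
strategy to `s i` using no facility closed in `s`, `fk` is open, and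
`c(fk) > Σ_{i : s_i = fk} Q_i(s)` where `Q_i(s) = c̃_i(nBR_i(s), s_{-i}) − c̃_i(s)`.
Letting every agent at `fk` simultaneously switch to its `nBR` yields `s'` with
`Φ(s') < Φ(s)`. -/
theorem closing_decreases_potential [Fintype A] [Fintype F] [DecidableEq A]
    (fc : F → ℝ) (cc : A → Option F → ℝ) (dc : A → A → ℝ)
    (hfc : ∀ f, 0 ≤ fc f) (hcc : ∀ i o, 0 ≤ cc i o)
    (hdc : ∀ i j, 0 ≤ dc i j) (hsym : ∀ i j, dc i j = dc j i)
    (s : A → Option F)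
    (hstab : ∀ i s', ct cc dc s i ≤ ct cc dc (Function.update s i s') i)
    (nbr : A → Option F)
    (hne : ∀ i, nbr i ≠ s i)
    (hmin : ∀ i s', s' ≠ s i →
      ct cc dc (Function.update s i (nbr i)) i ≤ ct cc dc (Function.update s i s') i)
    (hopen : ∀ i f, nbr i = some f → ∃ j, s j = some f)
    (fk : F) (hfk : ∃ i, s i = some fk)
    (hcost : (∑ i ∈ Finset.univ.filter (fun i => s i = some fk),
        (ct cc dc (Function.update s i (nbr i)) i - ct cc dc s i)) < fc fk) :
    PhiC fc cc dc (fun i => if s i = some fk then nbr i else s i) < PhiC fc cc dc s := by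
  set s' : A → Option F := fun i => if s i = some fk then nbr i else s i with hs'def
  -- Step 1: facility cost drops by at least fc fk
  have hfcost : fcost fc s' ≤ fcost fc s - fc fk := by
    apply fcost_close fc hfc s s' fk hfk
    intro f hf
    obtain ⟨i, hi⟩ := hf
    by_cases h : s i = some fk
    · simp only [hs'def, h, if_pos] at hi
      refine ⟨?_, hopen i f hi⟩
      rintro rfl
      exact hne i (by rw [hi, h])
    · simp only [hs'def, h, if_neg, if_false] at hi
      exact ⟨fun he => h (he ▸ hi), ⟨i, hi⟩⟩
  -- Step 2: pointwise symmetrized inequality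
  have key : ∀ i j : A,
      ((Dd dc s' i j - Dd dc s i j
          - (if s i = some fk
              then 2 * (Dd dc (Function.update s i (nbr i)) i j - Dd dc s i j) else 0))
       + (Dd dc s' j i - Dd dc s j i
          - (if s j = some fk
              then 2 * (Dd dc (Function.update s j (nbr j)) j i - Dd dc s j i) else 0))) ≤ 0 := by
    intro i j
    have hz : ∀ (σ : A → Option F) (a : A), Dd dc σ a a = 0 := by
      intro σ a; unfold Dd; simp
    by_cases hij : j = i
    · subst hij
      simp only [hz]
      split_ifs <;> norm_num
    · by_cases hi : s i = some fk <;> by_cases hj : s j = some fk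
      · -- both at fk
        have hcs : conn s i j := ⟨fk, hi, hj⟩
        have hDij : Dd dc s i j = 0 := Dd_of_conn dc s hcs
        have hDji : Dd dc s j i = 0 := Dd_of_conn dc s (conn_comm.mp hcs)
        have hUij : Dd dc (Function.update s i (nbr i)) i j = dc i j := by
          refine Dd_of_not_conn dc _ hij ?_
          rintro ⟨f, h1, h2⟩
          rw [Function.update_self] at h1
          rw [Function.update_of_ne hij] at h2
          rw [hj] at h2
          injection h2 with h2'
          subst h2'
          exact hne i (by rw [h1, hi])
        have hUji : Dd dc (Function.update s j (nbr j)) j i = dc j i := by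
          refine Dd_of_not_conn dc _ (fun h => hij h.symm) ?_
          rintro ⟨f, h1, h2⟩
          rw [Function.update_self] at h1
          rw [Function.update_of_ne (fun h => hij h.symm)] at h2
          rw [hi] at h2
          injection h2 with h2'
          subst h2'
          exact hne j (by rw [h1, hj])
        have hb1 : Dd dc s' i j ≤ dc i j := Dd_le dc hdc s' i j
        have hb2 : Dd dc s' j i ≤ dc j i := Dd_le dc hdc s' j i
        rw [if_pos hi, if_pos hj, hDij, hDji, hUij, hUji]
        have := hdc i j
        have := hdc j i
        linarith
      · -- i at fk, j not
        have hcs : ¬ conn s i j := by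
          rintro ⟨f, h1, h2⟩
          rw [hi] at h1
          injection h1 with h1'
          subst h1'
          exact hj h2
        have hDij : Dd dc s i j = dc i j := Dd_of_not_conn dc s hij hcs
        have hDji : Dd dc s j i = dc j i :=
          Dd_of_not_conn dc s (fun h => hij h.symm) (fun hc => hcs (conn_comm.mp hc))
        have hs'i : s' i = nbr i := by simp only [hs'def]; rw [if_pos hi]
        have hs'j : s' j = s j := by simp only [hs'def]; rw [if_neg hj]
        have hD'U : Dd dc s' i j = Dd dc (Function.update s i (nbr i)) i j := by
          refine Dd_congr dc i j ?_
          unfold conn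
          rw [hs'i, hs'j, Function.update_self, Function.update_of_ne hij]
        have hD'sym : Dd dc s' j i = Dd dc s' i j := (Dd_symm dc hsym s' i j).symm
        rw [if_pos hi, if_neg hj, hD'sym, hD'U, hDij, hDji, hsym j i]
        linarith
      · -- j at fk, i not
        have hcs : ¬ conn s j i := by
          rintro ⟨f, h1, h2⟩
          rw [hj] at h1
          injection h1 with h1'
          subst h1'
          exact hi h2
        have hDji : Dd dc s j i = dc j i :=
          Dd_of_not_conn dc s (fun h => hij h.symm) hcs
        have hDij : Dd dc s i j = dc i j :=
          Dd_of_not_conn dc s hij (fun hc => hcs (conn_comm.mp hc))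
        have hs'j : s' j = nbr j := by simp only [hs'def]; rw [if_pos hj]
        have hs'i : s' i = s i := by simp only [hs'def]; rw [if_neg hi]
        have hD'U : Dd dc s' j i = Dd dc (Function.update s j (nbr j)) j i := by
          refine Dd_congr dc j i ?_
          unfold conn
          rw [hs'j, hs'i, Function.update_self,
            Function.update_of_ne (fun h => hij h.symm)]
        have hD'sym : Dd dc s' i j = Dd dc s' j i := Dd_symm dc hsym s' i j
        rw [if_neg hi, if_pos hj, hD'sym, hD'U, hDij, hDji, hsym i j]
        linarith
      · -- neither at fk
        have hs'i : s' i = s i := by simp only [hs'def]; rw [if_neg hi]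
        have hs'j : s' j = s j := by simp only [hs'def]; rw [if_neg hj]
        have h1 : Dd dc s' i j = Dd dc s i j := by
          refine Dd_congr dc i j ?_
          unfold conn
          rw [hs'i, hs'j]
        have h2 : Dd dc s' j i = Dd dc s j i := by
          refine Dd_congr dc j i ?_
          unfold conn
          rw [hs'i, hs'j]
        rw [if_neg hi, if_neg hj, h1, h2]
        linarith
  -- Step 3: the double-sum inequality
  set F2 : A → A → ℝ := fun i j =>
    Dd dc s' i j - Dd dc s i j
      - (if s i = some fk
          then 2 * (Dd dc (Function.update s i (nbr i)) i j - Dd dc s i j) else 0) with hF2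
  have hFsum_nonpos : (∑ i, ∑ j, F2 i j) ≤ 0 := by
    have hswap : (∑ i, ∑ j, F2 j i) = ∑ i, ∑ j, F2 i j := Finset.sum_comm
    have hpair : (∑ i, ∑ j, (F2 i j + F2 j i)) ≤ 0 := by
      apply Finset.sum_nonpos
      intro i _
      apply Finset.sum_nonpos
      intro j _
      exact key i j
    have hsplit : (∑ i, ∑ j, (F2 i j + F2 j i))
        = (∑ i, ∑ j, F2 i j) + (∑ i, ∑ j, F2 j i) := by
      rw [← Finset.sum_add_distrib]
      refine Finset.sum_congr rfl fun i _ => ?_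
      rw [← Finset.sum_add_distrib]
    rw [hsplit, hswap] at hpair
    linarith
  have hFeq : (∑ i, ∑ j, F2 i j)
      = (∑ i, ∑ j, Dd dc s' i j) - (∑ i, ∑ j, Dd dc s i j)
        - 2 * ∑ i ∈ Finset.univ.filter (fun i => s i = some fk),
            ((∑ j, Dd dc (Function.update s i (nbr i)) i j) - ∑ j, Dd dc s i j) := by
    have hrow : ∀ i : A, (∑ j, F2 i j)
        = (∑ j, Dd dc s' i j) - (∑ j, Dd dc s i j)
          - (if s i = some fk
              then 2 * ((∑ j, Dd dc (Function.update s i (nbr i)) i j)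
                        - ∑ j, Dd dc s i j) else 0) := by
      intro i
      simp only [hF2]
      rw [Finset.sum_sub_distrib, Finset.sum_sub_distrib]
      congr 1
      split_ifs with h
      · rw [← Finset.mul_sum, Finset.sum_sub_distrib]
      · simp
    calc (∑ i, ∑ j, F2 i j)
        = ∑ i, ((∑ j, Dd dc s' i j) - (∑ j, Dd dc s i j)
            - (if s i = some fk
                then 2 * ((∑ j, Dd dc (Function.update s i (nbr i)) i j)
                          - ∑ j, Dd dc s i j) else 0)) :=
          Finset.sum_congr rfl fun i _ => hrow i
      _ = (∑ i, ∑ j, Dd dc s' i j) - (∑ i, ∑ j, Dd dc s i j)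
            - ∑ i, (if s i = some fk
                then 2 * ((∑ j, Dd dc (Function.update s i (nbr i)) i j)
                          - ∑ j, Dd dc s i j) else 0) := by
          rw [Finset.sum_sub_distrib, Finset.sum_sub_distrib]
      _ = _ := by
          rw [← Finset.sum_filter, Finset.mul_sum]
  -- Step 4: Q sum decomposition
  have hQ : (∑ i ∈ Finset.univ.filter (fun i => s i = some fk),
        (ct cc dc (Function.update s i (nbr i)) i - ct cc dc s i))
      = (∑ i ∈ Finset.univ.filter (fun i => s i = some fk),
          (cc i (nbr i) - cc i (s i)))
        + ∑ i ∈ Finset.univ.filter (fun i => s i = some fk),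
            ((∑ j, Dd dc (Function.update s i (nbr i)) i j) - ∑ j, Dd dc s i j) := by
    rw [← Finset.sum_add_distrib]
    refine Finset.sum_congr rfl fun i _ => ?_
    rw [ct_eq, ct_eq, Function.update_self]
    ring
  -- Step 5: connection-cost change
  have hccsum : (∑ i, cc i (s' i))
      = (∑ i, cc i (s i)) + ∑ i ∈ Finset.univ.filter (fun i => s i = some fk),
          (cc i (nbr i) - cc i (s i)) := by
    rw [Finset.sum_filter, ← Finset.sum_add_distrib]
    refine Finset.sum_congr rfl fun i _ => ?_
    by_cases h : s i = some fk
    · simp only [hs'def]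
      rw [if_pos h, if_pos h]
      ring
    · simp only [hs'def]
      rw [if_neg h, if_neg h]
      ring
  -- Combine
  have hPhi0s' : Phi0 cc dc s'
      = (∑ i, cc i (s' i)) + (1 / 2) * ∑ i, ∑ j, Dd dc s' i j := Phi0_eq cc dc s'
  have hPhi0s : Phi0 cc dc s
      = (∑ i, cc i (s i)) + (1 / 2) * ∑ i, ∑ j, Dd dc s i j := Phi0_eq cc dc s
  rw [PhiC, PhiC, hPhi0s', hPhi0s, hccsum]
  rw [hQ] at hcost
  rw [hFeq] at hFsum_nonpos
  linarith
end

section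
/- Payment-vs-PoS tradeoff: for every instance of the facility-choice game, Δ/c(s*) ≤ 1 − (2/5)·PoS, where s* is a social-cost-minimizing assignment, Δ = Σ_i (c̃_i(s*) − c̃_i(b_i, s*_{-i})) with b_i a best response of i against s*_{-i}, and PoS = c(ŝ)/c(s*) for ŝ the best stable state. -/
open Finset
open scoped Classical

variable {A F : Type*}

/-- A state `(s, γ)` is stable: prices are nonnegative, only paid at a used facility,
budget balanced (each open facility's cost is exactly covered), and no agent can
strictly decrease its total cost by deviating (anticipating price 0 elsewhere). -/
def Stable [Fintype A] [Fintype F] [DecidableEq A] (fc : F → ℝ) (cc : A → Option F → ℝ)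
    (dc : A → A → ℝ) (s : A → Option F) (γ : A → ℝ) : Prop :=
  (∀ i, 0 ≤ γ i) ∧ (∀ i, s i = none → γ i = 0) ∧
    (∀ f, (∃ i, s i = some f) →
      ∑ i ∈ Finset.univ.filter (fun i => s i = some f), γ i = fc f) ∧
    (∀ i s', s' ≠ s i →
      ct cc dc s i + γ i ≤ ct cc dc (Function.update s i s') i)

-- ===================== auxiliary definitions =====================

/-- disconnection cost of agent `i` in state `s`. -/
noncomputable def dis [Fintype A] (dc : A → A → ℝ) (s : A → Option F) (i : A) : ℝ :=
  ∑ j ∈ Finset.univ.filter (fun j => j ≠ i ∧ ¬ conn s i j), dc i j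

lemma ct_eq_dis [Fintype A] (cc : A → Option F → ℝ) (dc : A → A → ℝ)
    (s : A → Option F) (i : A) : ct cc dc s i = cc i (s i) + dis dc s i := rfl

lemma conn_symm {s : A → Option F} {i j : A} (h : conn s i j) : conn s j i := by
  obtain ⟨f, h1, h2⟩ := h; exact ⟨f, h2, h1⟩

lemma conn_congr {s1 s2 : A → Option F} {i j : A} (h1 : s1 i = s2 i) (h2 : s1 j = s2 j) :
    conn s1 i j ↔ conn s2 i j := by unfold conn; rw [h1, h2]

lemma dis_eq_sum_ite [Fintype A] [DecidableEq A] (dc : A → A → ℝ) (s : A → Option F) (i : A) :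
    dis dc s i = ∑ j, if (j ≠ i ∧ ¬ conn s i j) then dc i j else 0 := by
  unfold dis
  rw [Finset.sum_filter]
  exact Finset.sum_congr rfl fun j _ => by congr

lemma dis_nonneg [Fintype A] {dc : A → A → ℝ} (hdc : ∀ i j, 0 ≤ dc i j)
    (s : A → Option F) (i : A) : 0 ≤ dis dc s i :=
  Finset.sum_nonneg fun j _ => hdc i j

lemma ct_nonneg [Fintype A] {cc : A → Option F → ℝ} {dc : A → A → ℝ}
    (hcc : ∀ i o, 0 ≤ cc i o) (hdc : ∀ i j, 0 ≤ dc i j)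
    (s : A → Option F) (i : A) : 0 ≤ ct cc dc s i :=
  add_nonneg (hcc _ _) (dis_nonneg hdc s i)

-- CORE: the disconnection sum change under a single-agent move
lemma sum_dis_update [Fintype A] [DecidableEq A] {dc : A → A → ℝ}
    (hsym : ∀ i j, dc i j = dc j i) (s : A → Option F) (i : A) (t : Option F) :
    ∑ k, dis dc (Function.update s i t) k
      = ∑ k, dis dc s k
        + 2 * (dis dc (Function.update s i t) i - dis dc s i) := by
  set s' := Function.update s i t with hs'
  have hup : ∀ k, k ≠ i → s' k = s k := fun k hk => Function.update_of_ne hk _ _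
  set H : A → ℝ := fun j =>
    (if (j ≠ i ∧ ¬ conn s' i j) then dc i j else 0)
      - (if (j ≠ i ∧ ¬ conn s i j) then dc i j else 0) with hH
  have hHi : H i = 0 := by simp [hH]
  have h1 : dis dc s' i - dis dc s i = ∑ j, H j := by
    rw [dis_eq_sum_ite, dis_eq_sum_ite, ← Finset.sum_sub_distrib]
    all_goals exact Finset.sum_congr rfl (fun j _ => by congr)
  have h2 : ∀ k, k ≠ i → dis dc s' k - dis dc s k = H k := by
    intro k hk
    rw [dis_eq_sum_ite, dis_eq_sum_ite, ← Finset.sum_sub_distrib]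
    rw [Finset.sum_eq_single i]
    · have e1 : (i ≠ k ∧ ¬ conn s' k i) ↔ (k ≠ i ∧ ¬ conn s' i k) := by
        constructor
        · rintro ⟨a, c⟩; exact ⟨a.symm, fun hc => c (conn_symm hc)⟩
        · rintro ⟨a, c⟩; exact ⟨a.symm, fun hc => c (conn_symm hc)⟩
      have e2 : (i ≠ k ∧ ¬ conn s k i) ↔ (k ≠ i ∧ ¬ conn s i k) := by
        constructor
        · rintro ⟨a, c⟩; exact ⟨a.symm, fun hc => c (conn_symm hc)⟩
        · rintro ⟨a, c⟩; exact ⟨a.symm, fun hc => c (conn_symm hc)⟩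
      simp only [hH]
      rw [hsym k i]
      simp only [e1, e2]
    · intro j _ hj
      have hc : conn s' k j ↔ conn s k j := conn_congr (hup k hk) (hup j hj)
      rw [hc]; ring
    · intro h; exact absurd (mem_univ i) h
  have hsplit : ∀ k, dis dc s' k - dis dc s k
      = Function.update H i (dis dc s' i - dis dc s i) k := by
    intro k
    by_cases hk : k = i
    · subst hk; rw [Function.update_self]
    · rw [Function.update_of_ne hk, h2 k hk]
  have htot : ∑ k, dis dc s' k - ∑ k, dis dc s k
      = (dis dc s' i - dis dc s i) + ∑ k ∈ univ \ {i}, H k := by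
    rw [← Finset.sum_sub_distrib, Finset.sum_congr rfl (fun k _ => hsplit k),
      Finset.sum_update_of_mem (mem_univ i)]
  have herase : ∑ k ∈ univ \ {i}, H k = ∑ k, H k - H i := by
    rw [← Finset.erase_eq]; exact Finset.sum_erase_eq_sub (mem_univ i)
  have h1' : ∑ j, H j = dis dc s' i - dis dc s i := h1.symm
  rw [herase, hHi, h1'] at htot
  linarith

lemma ite_le_dc {dc : A → A → ℝ} (hdc : ∀ i j, 0 ≤ dc i j) (p : Prop) [Decidable p]
    (k j : A) : (if p then dc k j else 0) ≤ dc k j := by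
  split_ifs
  · exact le_rfl
  · exact hdc k j

lemma ite_dc_nonneg {dc : A → A → ℝ} (hdc : ∀ i j, 0 ≤ dc i j) (p : Prop) [Decidable p]
    (k j : A) : 0 ≤ (if p then dc k j else 0) := by
  split_ifs
  · exact hdc k j
  · exact le_rfl

lemma ite_dc_congr {dc : A → A → ℝ} {p q : Prop} [Decidable p] [Decidable q]
    (h : p ↔ q) (k j : A) : (if p then dc k j else 0) = (if q then dc k j else 0) := by
  congr 1
  · exact propext h

-- GROUP move: disconnection sums
lemma sum_dis_group [Fintype A] [DecidableEq A] {dc : A → A → ℝ}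
    (hdc : ∀ i j, 0 ≤ dc i j) (hsym : ∀ i j, dc i j = dc j i)
    (s : A → Option F) (U : Finset A) (t : A → Option F)
    (hUU : ∀ k ∈ U, ∀ l ∈ U, k ≠ l →
      conn s k l ∧ ¬ conn (Function.update s k (t k)) k l) :
    ∑ k, dis dc (fun j => if j ∈ U then t j else s j) k
      ≤ ∑ k, dis dc s k
        + 2 * ∑ k ∈ U, (dis dc (Function.update s k (t k)) k - dis dc s k) := by
  set s' : A → Option F := fun j => if j ∈ U then t j else s j with hs'
  have hsU : ∀ k, k ∈ U → s' k = t k := fun k hk => by simp only [hs', if_pos hk]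
  have hsN : ∀ k, k ∉ U → s' k = s k := fun k hk => by simp only [hs', if_neg hk]
  have key : ∀ k j : A,
      (if (j ≠ k ∧ ¬ conn s' k j) then dc k j else 0)
        ≤ (if (j ≠ k ∧ ¬ conn s k j) then dc k j else 0)
          + (if k ∈ U then ((if (j ≠ k ∧ ¬ conn (Function.update s k (t k)) k j) then dc k j else 0)
              - (if (j ≠ k ∧ ¬ conn s k j) then dc k j else 0)) else 0)
          + (if j ∈ U then ((if (k ≠ j ∧ ¬ conn (Function.update s j (t j)) j k) then dc j k else 0)
              - (if (k ≠ j ∧ ¬ conn s j k) then dc j k else 0)) else 0) := by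
    intro k j
    by_cases hjk : j = k
    · subst hjk; simp
    · by_cases hk : k ∈ U <;> by_cases hj : j ∈ U
      · -- both in U
        obtain ⟨hc, hnc⟩ := hUU k hk j hj (Ne.symm hjk)
        obtain ⟨hc', hnc'⟩ := hUU j hj k hk hjk
        have r1 : (if (j ≠ k ∧ ¬ conn s k j) then dc k j else 0) = 0 :=
          if_neg (fun h => h.2 hc)
        have r2 : (if (j ≠ k ∧ ¬ conn (Function.update s k (t k)) k j) then dc k j else 0)
            = dc k j := if_pos ⟨hjk, hnc⟩
        have r3 : (if (k ≠ j ∧ ¬ conn (Function.update s j (t j)) j k) then dc j k else 0)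
            = dc j k := if_pos ⟨fun h => hjk h.symm, hnc'⟩
        have r4 : (if (k ≠ j ∧ ¬ conn s j k) then dc j k else 0) = 0 :=
          if_neg (fun h => h.2 hc')
        rw [if_pos hk, if_pos hj, r1, r2, r3, r4]
        have l1 := ite_le_dc hdc (j ≠ k ∧ ¬ conn s' k j) k j
        have l2 := hdc j k
        linarith
      · -- k ∈ U, j ∉ U
        have h1 : conn s' k j ↔ conn (Function.update s k (t k)) k j :=
          conn_congr (by rw [hsU k hk, Function.update_self])
            (by rw [hsN j hj, Function.update_of_ne hjk])
        have hEq : (if (j ≠ k ∧ ¬ conn s' k j) then dc k j else 0)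
            = (if (j ≠ k ∧ ¬ conn (Function.update s k (t k)) k j) then dc k j else 0) :=
          ite_dc_congr (and_congr_right fun _ => not_congr h1) k j
        rw [if_pos hk, if_neg hj, hEq]
        ring_nf
        exact le_rfl
      · -- k ∉ U, j ∈ U
        have h0 : conn s' k j ↔ conn s' j k := ⟨conn_symm, conn_symm⟩
        have h1 : conn s' j k ↔ conn (Function.update s j (t j)) j k :=
          conn_congr (by rw [hsU j hj, Function.update_self])
            (by rw [hsN k hk, Function.update_of_ne (fun h => hjk h.symm)])
        have e1 : (j ≠ k ∧ ¬ conn s' k j) ↔ (k ≠ j ∧ ¬ conn (Function.update s j (t j)) j k) := by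
          constructor
          · rintro ⟨a, c⟩; exact ⟨a.symm, fun hx => c ((h0.trans h1).mpr hx)⟩
          · rintro ⟨a, c⟩; exact ⟨a.symm, fun hx => c ((h0.trans h1).mp hx)⟩
        have e2 : (k ≠ j ∧ ¬ conn s j k) ↔ (j ≠ k ∧ ¬ conn s k j) := by
          constructor
          · rintro ⟨a, c⟩; exact ⟨a.symm, fun hx => c (conn_symm hx)⟩
          · rintro ⟨a, c⟩; exact ⟨a.symm, fun hx => c (conn_symm hx)⟩
        have hEq : (if (j ≠ k ∧ ¬ conn s' k j) then dc k j else 0)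
            = (if (k ≠ j ∧ ¬ conn (Function.update s j (t j)) j k) then dc j k else 0) := by
          rw [hsym k j]; exact ite_dc_congr e1 j k
        have hEq2 : (if (k ≠ j ∧ ¬ conn s j k) then dc j k else 0)
            = (if (j ≠ k ∧ ¬ conn s k j) then dc k j else 0) := by
          rw [hsym j k]; exact ite_dc_congr e2 k j
        rw [if_neg hk, if_pos hj, hEq, hEq2]
        ring_nf
        exact le_rfl
      · -- neither
        have h1 : conn s' k j ↔ conn s k j := conn_congr (hsN k hk) (hsN j hj)
        have hEq : (if (j ≠ k ∧ ¬ conn s' k j) then dc k j else 0)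
            = (if (j ≠ k ∧ ¬ conn s k j) then dc k j else 0) :=
          ite_dc_congr (and_congr_right fun _ => not_congr h1) k j
        rw [if_neg hk, if_neg hj, hEq]
        simp
  -- assemble
  have hL : ∑ k, dis dc s' k
      = ∑ k, ∑ j, (if (j ≠ k ∧ ¬ conn s' k j) then dc k j else 0) :=
    Finset.sum_congr rfl fun k _ => dis_eq_sum_ite dc s' k
  have hstep : ∑ k, dis dc s' k
      ≤ ∑ k, ∑ j, ((if (j ≠ k ∧ ¬ conn s k j) then dc k j else 0)
          + (if k ∈ U then ((if (j ≠ k ∧ ¬ conn (Function.update s k (t k)) k j) then dc k j else 0)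
              - (if (j ≠ k ∧ ¬ conn s k j) then dc k j else 0)) else 0)
          + (if j ∈ U then ((if (k ≠ j ∧ ¬ conn (Function.update s j (t j)) j k) then dc j k else 0)
              - (if (k ≠ j ∧ ¬ conn s j k) then dc j k else 0)) else 0)) := by
    rw [hL]
    exact Finset.sum_le_sum fun k _ => Finset.sum_le_sum fun j _ => key k j
  have hT1 : ∑ k, ∑ j, (if (j ≠ k ∧ ¬ conn s k j) then dc k j else 0) = ∑ k, dis dc s k :=
    Finset.sum_congr rfl fun k _ => (dis_eq_sum_ite dc s k).symm
  have hT2 : ∑ k, ∑ j, (if k ∈ U then ((if (j ≠ k ∧ ¬ conn (Function.update s k (t k)) k j) then dc k j else 0)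
              - (if (j ≠ k ∧ ¬ conn s k j) then dc k j else 0)) else 0)
      = ∑ k ∈ U, (dis dc (Function.update s k (t k)) k - dis dc s k) := by
    have h1 : ∀ k, ∑ j, (if k ∈ U then ((if (j ≠ k ∧ ¬ conn (Function.update s k (t k)) k j) then dc k j else 0)
              - (if (j ≠ k ∧ ¬ conn s k j) then dc k j else 0)) else 0)
        = (if k ∈ U then (dis dc (Function.update s k (t k)) k - dis dc s k) else 0) := by
      intro k
      split_ifs with h
      · rw [Finset.sum_sub_distrib, ← dis_eq_sum_ite, ← dis_eq_sum_ite]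
      · exact Finset.sum_const_zero
    rw [Finset.sum_congr rfl fun k _ => h1 k]
    rw [Finset.sum_ite_mem, Finset.univ_inter]
  have hT3 : ∑ k, ∑ j, (if j ∈ U then ((if (k ≠ j ∧ ¬ conn (Function.update s j (t j)) j k) then dc j k else 0)
              - (if (k ≠ j ∧ ¬ conn s j k) then dc j k else 0)) else 0)
      = ∑ k ∈ U, (dis dc (Function.update s k (t k)) k - dis dc s k) := by
    rw [Finset.sum_comm]
    have h1 : ∀ j, ∑ k, (if j ∈ U then ((if (k ≠ j ∧ ¬ conn (Function.update s j (t j)) j k) then dc j k else 0)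
              - (if (k ≠ j ∧ ¬ conn s j k) then dc j k else 0)) else 0)
        = (if j ∈ U then (dis dc (Function.update s j (t j)) j - dis dc s j) else 0) := by
      intro j
      split_ifs with h
      · rw [Finset.sum_sub_distrib, ← dis_eq_sum_ite, ← dis_eq_sum_ite]
      · exact Finset.sum_const_zero
    rw [Finset.sum_congr rfl fun j _ => h1 j]
    rw [Finset.sum_ite_mem, Finset.univ_inter]
  have hsplit : ∑ k, ∑ j, ((if (j ≠ k ∧ ¬ conn s k j) then dc k j else 0)
          + (if k ∈ U then ((if (j ≠ k ∧ ¬ conn (Function.update s k (t k)) k j) then dc k j else 0)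
              - (if (j ≠ k ∧ ¬ conn s k j) then dc k j else 0)) else 0)
          + (if j ∈ U then ((if (k ≠ j ∧ ¬ conn (Function.update s j (t j)) j k) then dc j k else 0)
              - (if (k ≠ j ∧ ¬ conn s j k) then dc j k else 0)) else 0))
      = (∑ k, ∑ j, (if (j ≠ k ∧ ¬ conn s k j) then dc k j else 0))
        + (∑ k, ∑ j, (if k ∈ U then ((if (j ≠ k ∧ ¬ conn (Function.update s k (t k)) k j) then dc k j else 0)
              - (if (j ≠ k ∧ ¬ conn s k j) then dc k j else 0)) else 0))
        + (∑ k, ∑ j, (if j ∈ U then ((if (k ≠ j ∧ ¬ conn (Function.update s j (t j)) j k) then dc j k else 0)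
              - (if (k ≠ j ∧ ¬ conn s j k) then dc j k else 0)) else 0)) := by
    rw [← Finset.sum_add_distrib, ← Finset.sum_add_distrib]
    exact Finset.sum_congr rfl fun k _ => by
      rw [← Finset.sum_add_distrib, ← Finset.sum_add_distrib]
  rw [hsplit, hT1, hT2, hT3] at hstep
  linarith

-- b-state disconnection bound
lemma sum_dis_bstate [Fintype A] [DecidableEq A] {dc : A → A → ℝ}
    (hdc : ∀ i j, 0 ≤ dc i j) (hsym : ∀ i j, dc i j = dc j i)
    (σ x : A → Option F) :
    ∑ k, dis dc x k
      ≤ 2 * ∑ k, dis dc (Function.update σ k (x k)) k + ∑ k, dis dc σ k := by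
  have key : ∀ k j : A,
      (if (j ≠ k ∧ ¬ conn x k j) then dc k j else 0)
        ≤ (if (j ≠ k ∧ ¬ conn (Function.update σ k (x k)) k j) then dc k j else 0)
          + (if (k ≠ j ∧ ¬ conn (Function.update σ j (x j)) j k) then dc j k else 0)
          + (if (j ≠ k ∧ ¬ conn σ k j) then dc k j else 0) := by
    intro k j
    have n1 := ite_dc_nonneg hdc (j ≠ k ∧ ¬ conn (Function.update σ k (x k)) k j) k j
    have n2 := ite_dc_nonneg hdc (k ≠ j ∧ ¬ conn (Function.update σ j (x j)) j k) j k
    have n3 := ite_dc_nonneg hdc (j ≠ k ∧ ¬ conn σ k j) k j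
    by_cases hjk : j = k
    · subst hjk
      have : (if (j ≠ j ∧ ¬ conn x j j) then dc j j else 0) = 0 := by simp
      rw [this]; linarith
    · by_cases c1 : conn (Function.update σ k (x k)) k j
      · by_cases c2 : conn (Function.update σ j (x j)) j k
        · by_cases c3 : conn σ k j
          · -- derive conn x k j
            obtain ⟨f, hf1, hf2⟩ := c1
            obtain ⟨f', hg1, hg2⟩ := c2
            obtain ⟨f'', hh1, hh2⟩ := c3
            rw [Function.update_self] at hf1 hg1
            rw [Function.update_of_ne hjk] at hf2
            rw [Function.update_of_ne (fun h => hjk h.symm)] at hg2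
            -- hf1 : x k = some f, hf2 : σ j = some f
            -- hg1 : x j = some f', hg2 : σ k = some f'
            -- hh1 : σ k = some f'', hh2 : σ j = some f''
            have hff : f = f'' := by rw [hf2] at hh2; exact Option.some_inj.1 hh2
            have hff' : f' = f'' := by rw [hg2] at hh1; exact Option.some_inj.1 hh1
            have hcx : conn x k j := ⟨f'', by rw [hf1, hff], by rw [hg1, hff']⟩
            have : (if (j ≠ k ∧ ¬ conn x k j) then dc k j else 0) = 0 :=
              if_neg (fun h => h.2 hcx)
            rw [this]; linarith
          · have r3 : (if (j ≠ k ∧ ¬ conn σ k j) then dc k j else 0) = dc k j :=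
              if_pos ⟨hjk, c3⟩
            rw [r3]
            have := ite_le_dc hdc (j ≠ k ∧ ¬ conn x k j) k j
            linarith
        · have r2 : (if (k ≠ j ∧ ¬ conn (Function.update σ j (x j)) j k) then dc j k else 0)
              = dc j k := if_pos ⟨fun h => hjk h.symm, c2⟩
          rw [r2, hsym j k]
          have := ite_le_dc hdc (j ≠ k ∧ ¬ conn x k j) k j
          linarith
      · have r1 : (if (j ≠ k ∧ ¬ conn (Function.update σ k (x k)) k j) then dc k j else 0)
            = dc k j := if_pos ⟨hjk, c1⟩
        rw [r1]
        have := ite_le_dc hdc (j ≠ k ∧ ¬ conn x k j) k j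
        linarith
  have hstep : ∑ k, dis dc x k
      ≤ ∑ k, ∑ j, ((if (j ≠ k ∧ ¬ conn (Function.update σ k (x k)) k j) then dc k j else 0)
          + (if (k ≠ j ∧ ¬ conn (Function.update σ j (x j)) j k) then dc j k else 0)
          + (if (j ≠ k ∧ ¬ conn σ k j) then dc k j else 0)) := by
    rw [Finset.sum_congr rfl fun k (_ : k ∈ univ) => dis_eq_sum_ite dc x k]
    exact Finset.sum_le_sum fun k _ => Finset.sum_le_sum fun j _ => key k j
  have hT1 : ∑ k, ∑ j, (if (j ≠ k ∧ ¬ conn (Function.update σ k (x k)) k j) then dc k j else 0)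
      = ∑ k, dis dc (Function.update σ k (x k)) k :=
    Finset.sum_congr rfl fun k _ => (dis_eq_sum_ite dc _ k).symm
  have hT2 : ∑ k, ∑ j, (if (k ≠ j ∧ ¬ conn (Function.update σ j (x j)) j k) then dc j k else 0)
      = ∑ k, dis dc (Function.update σ k (x k)) k := by
    rw [Finset.sum_comm]
    exact Finset.sum_congr rfl fun j _ => (dis_eq_sum_ite dc _ j).symm
  have hT3 : ∑ k, ∑ j, (if (j ≠ k ∧ ¬ conn σ k j) then dc k j else 0) = ∑ k, dis dc σ k :=
    Finset.sum_congr rfl fun k _ => (dis_eq_sum_ite dc σ k).symm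
  have hsplit : ∑ k, ∑ j, ((if (j ≠ k ∧ ¬ conn (Function.update σ k (x k)) k j) then dc k j else 0)
          + (if (k ≠ j ∧ ¬ conn (Function.update σ j (x j)) j k) then dc j k else 0)
          + (if (j ≠ k ∧ ¬ conn σ k j) then dc k j else 0))
      = (∑ k, ∑ j, (if (j ≠ k ∧ ¬ conn (Function.update σ k (x k)) k j) then dc k j else 0))
        + (∑ k, ∑ j, (if (k ≠ j ∧ ¬ conn (Function.update σ j (x j)) j k) then dc j k else 0))
        + (∑ k, ∑ j, (if (j ≠ k ∧ ¬ conn σ k j) then dc k j else 0)) := by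
    rw [← Finset.sum_add_distrib, ← Finset.sum_add_distrib]
    exact Finset.sum_congr rfl fun k _ => by
      rw [← Finset.sum_add_distrib, ← Finset.sum_add_distrib]
  rw [hsplit, hT1, hT2, hT3] at hstep
  linarith

-- cc sum under single update
lemma sum_cc_update [Fintype A] [DecidableEq A] (cc : A → Option F → ℝ)
    (s : A → Option F) (i : A) (t : Option F) :
    ∑ k, cc k (Function.update s i t k) = ∑ k, cc k (s k) + (cc i t - cc i (s i)) := by
  have h1 : (fun k => cc k (Function.update s i t k))
      = Function.update (fun k => cc k (s k)) i (cc i t) := by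
    funext k
    by_cases hk : k = i
    · subst hk; rw [Function.update_self, Function.update_self]
    · rw [Function.update_of_ne hk, Function.update_of_ne hk]
  rw [show ∑ k, cc k (Function.update s i t k)
      = ∑ k, Function.update (fun k => cc k (s k)) i (cc i t) k from by rw [← h1]]
  rw [Finset.sum_update_of_mem (mem_univ i)]
  have h2 : ∑ k ∈ univ \ {i}, cc k (s k) = ∑ k, cc k (s k) - cc i (s i) := by
    rw [← Finset.erase_eq]; exact Finset.sum_erase_eq_sub (mem_univ i)
  rw [h2]; ring


-- ================= layer 2 =================

lemma Phi0_eq_dis [Fintype A] (cc : A → Option F → ℝ) (dc : A → A → ℝ) (s : A → Option F) :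
    Phi0 cc dc s = (∑ i, cc i (s i)) + (1 / 2) * ∑ i, dis dc s i := rfl

lemma soc_eq_dis [Fintype A] (cc : A → Option F → ℝ) (dc : A → A → ℝ) (s : A → Option F) :
    soc cc dc s = (∑ i, cc i (s i)) + ∑ i, dis dc s i := rfl

lemma soc_eq_sum_ct [Fintype A] (cc : A → Option F → ℝ) (dc : A → A → ℝ) (s : A → Option F) :
    soc cc dc s = ∑ i, ct cc dc s i := by
  rw [soc_eq_dis, ← Finset.sum_add_distrib]
  exact Finset.sum_congr rfl fun i _ => (ct_eq_dis cc dc s i).symm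

lemma fcost_nonneg [Fintype F] {fc : F → ℝ} (hfc : ∀ f, 0 ≤ fc f) (s : A → Option F) :
    0 ≤ fcost fc s :=
  Finset.sum_nonneg fun f _ => hfc f

lemma soc_nonneg [Fintype A] {cc : A → Option F → ℝ} {dc : A → A → ℝ}
    (hcc : ∀ i o, 0 ≤ cc i o) (hdc : ∀ i j, 0 ≤ dc i j) (s : A → Option F) :
    0 ≤ soc cc dc s := by
  rw [soc_eq_dis]
  exact add_nonneg (Finset.sum_nonneg fun i _ => hcc _ _)
    (Finset.sum_nonneg fun i _ => dis_nonneg hdc s i)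

lemma socC_nonneg [Fintype A] [Fintype F] {fc : F → ℝ} {cc : A → Option F → ℝ}
    {dc : A → A → ℝ} (hfc : ∀ f, 0 ≤ fc f) (hcc : ∀ i o, 0 ≤ cc i o)
    (hdc : ∀ i j, 0 ≤ dc i j) (s : A → Option F) : 0 ≤ socC fc cc dc s :=
  add_nonneg (fcost_nonneg hfc s) (soc_nonneg hcc hdc s)

lemma socC_le_two_phiC [Fintype A] [Fintype F] {fc : F → ℝ} {cc : A → Option F → ℝ}
    {dc : A → A → ℝ} (hfc : ∀ f, 0 ≤ fc f) (hcc : ∀ i o, 0 ≤ cc i o) (s : A → Option F) :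
    socC fc cc dc s ≤ 2 * PhiC fc cc dc s := by
  have h1 : 0 ≤ fcost fc s := fcost_nonneg hfc s
  have h2 : 0 ≤ ∑ i, cc i (s i) := Finset.sum_nonneg fun i _ => hcc _ _
  simp only [socC, PhiC, soc_eq_dis, Phi0_eq_dis]
  linarith

lemma fcost_mono [Fintype F] {fc : F → ℝ} (hfc : ∀ f, 0 ≤ fc f) {s s' : A → Option F}
    (h : ∀ g : F, (∃ i, s' i = some g) → ∃ i, s i = some g) :
    fcost fc s' ≤ fcost fc s := by
  apply Finset.sum_le_sum_of_subset_of_nonneg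
  · intro g hg
    rw [Finset.mem_filter] at hg ⊢
    exact ⟨Finset.mem_univ _, h g hg.2⟩
  · intro g _ _; exact hfc g

lemma fcost_le_sub [Fintype F] {fc : F → ℝ} (hfc : ∀ f, 0 ≤ fc f) {s s' : A → Option F} {f : F}
    (hf : ∃ i, s i = some f)
    (h : ∀ g : F, (∃ i, s' i = some g) → g ≠ f ∧ ∃ i, s i = some g) :
    fcost fc s' ≤ fcost fc s - fc f := by
  have hsub : (univ.filter fun g : F => ∃ i, s' i = some g)
      ⊆ (univ.filter fun g : F => ∃ i, s i = some g).erase f := by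
    intro g hg
    rw [Finset.mem_filter] at hg
    rw [Finset.mem_erase, Finset.mem_filter]
    exact ⟨(h g hg.2).1, Finset.mem_univ _, (h g hg.2).2⟩
  calc fcost fc s' ≤ ∑ g ∈ (univ.filter fun g : F => ∃ i, s i = some g).erase f, fc g :=
        Finset.sum_le_sum_of_subset_of_nonneg hsub (fun g _ _ => hfc g)
    _ = fcost fc s - fc f :=
        Finset.sum_erase_eq_sub (by rw [Finset.mem_filter]; exact ⟨Finset.mem_univ _, hf⟩)

lemma Phi0_update_eq [Fintype A] [DecidableEq A] {cc : A → Option F → ℝ} {dc : A → A → ℝ}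
    (hsym : ∀ i j, dc i j = dc j i) (s : A → Option F) (i : A) (t : Option F) :
    Phi0 cc dc (Function.update s i t)
      = Phi0 cc dc s + (ct cc dc (Function.update s i t) i - ct cc dc s i) := by
  rw [Phi0_eq_dis, Phi0_eq_dis, sum_cc_update, sum_dis_update hsym,
    ct_eq_dis, ct_eq_dis, Function.update_self]
  ring

lemma soc_update_eq [Fintype A] [DecidableEq A] {cc : A → Option F → ℝ} {dc : A → A → ℝ}
    (hsym : ∀ i j, dc i j = dc j i) (s : A → Option F) (i : A) (t : Option F) :
    soc cc dc (Function.update s i t)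
      = soc cc dc s + (cc i t - cc i (s i))
        + 2 * (dis dc (Function.update s i t) i - dis dc s i) := by
  rw [soc_eq_dis, soc_eq_dis, sum_cc_update, sum_dis_update hsym]
  ring

lemma Phi0_group [Fintype A] [DecidableEq A] {cc : A → Option F → ℝ} {dc : A → A → ℝ}
    (hdc : ∀ i j, 0 ≤ dc i j) (hsym : ∀ i j, dc i j = dc j i)
    (s : A → Option F) (U : Finset A) (t : A → Option F)
    (hUU : ∀ k ∈ U, ∀ l ∈ U, k ≠ l →
      conn s k l ∧ ¬ conn (Function.update s k (t k)) k l) :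
    Phi0 cc dc (fun j => if j ∈ U then t j else s j)
      ≤ Phi0 cc dc s + ∑ k ∈ U, (ct cc dc (Function.update s k (t k)) k - ct cc dc s k) := by
  have hccpart : ∑ k, cc k (if k ∈ U then t k else s k)
      = ∑ k, cc k (s k) + ∑ k ∈ U, (cc k (t k) - cc k (s k)) := by
    have h1 : ∑ k ∈ U, (cc k ((fun j => if j ∈ U then t j else s j) k) - cc k (s k))
        = ∑ k, (cc k ((fun j => if j ∈ U then t j else s j) k) - cc k (s k)) :=
      Finset.sum_subset (Finset.subset_univ U)
        (fun x _ hx => by simp only [if_neg hx, sub_self])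
    have h2 : ∑ k ∈ U, (cc k ((fun j => if j ∈ U then t j else s j) k) - cc k (s k))
        = ∑ k ∈ U, (cc k (t k) - cc k (s k)) :=
      Finset.sum_congr rfl fun k hk => by simp only [if_pos hk]
    have h3 : ∑ k, (cc k ((fun j => if j ∈ U then t j else s j) k) - cc k (s k))
        = ∑ k, cc k (if k ∈ U then t k else s k) - ∑ k, cc k (s k) := by
      rw [Finset.sum_sub_distrib]
    rw [← h2, h1, h3]; ring
  have hgrp := sum_dis_group hdc hsym s U t hUU
  have hctsum : ∑ k ∈ U, (ct cc dc (Function.update s k (t k)) k - ct cc dc s k)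
      = ∑ k ∈ U, (cc k (t k) - cc k (s k))
        + ∑ k ∈ U, (dis dc (Function.update s k (t k)) k - dis dc s k) := by
    rw [← Finset.sum_add_distrib]
    refine Finset.sum_congr rfl fun k _ => ?_
    rw [ct_eq_dis, ct_eq_dis, Function.update_self]
    ring
  rw [Phi0_eq_dis, Phi0_eq_dis, hctsum, hccpart]
  linarith

-- moving to an unused facility is no better than moving to none
lemma ct_update_none_le [Fintype A] [DecidableEq A] {cc : A → Option F → ℝ} {dc : A → A → ℝ}
    (hcc0 : ∀ i, cc i none = 0) (hcc : ∀ i o, 0 ≤ cc i o)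
    {s : A → Option F} {i : A} {g : F} (hg : ∀ j, j ≠ i → s j ≠ some g) :
    ct cc dc (Function.update s i none) i ≤ ct cc dc (Function.update s i (some g)) i := by
  rw [ct_eq_dis, ct_eq_dis, Function.update_self, Function.update_self]
  have hdise : dis dc (Function.update s i none) i = dis dc (Function.update s i (some g)) i := by
    rw [dis_eq_sum_ite, dis_eq_sum_ite]
    refine Finset.sum_congr rfl fun j _ => ite_dc_congr ?_ i j
    have h1 : ¬ conn (Function.update s i none) i j := by
      rintro ⟨f, hf1, _⟩
      rw [Function.update_self] at hf1
      exact nomatch hf1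
    have h2 : j ≠ i → ¬ conn (Function.update s i (some g)) i j := by
      intro hj
      rintro ⟨f, hf1, hf2⟩
      rw [Function.update_self] at hf1
      rw [Function.update_of_ne hj] at hf2
      exact hg j hj (by rw [hf2, ← hf1])
    constructor
    · rintro ⟨hj, -⟩; exact ⟨hj, h2 hj⟩
    · rintro ⟨hj, -⟩; exact ⟨hj, h1⟩
  rw [hcc0 i, hdise]
  have := hcc i (some g)
  linarith

-- per-agent optimality bound: 2·ct(σ,i) − cc_i(σ_i) ≤ 2·ct(σ_{-i},t)
lemma opt_agent [Fintype A] [Fintype F] [DecidableEq A]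
    (fc : F → ℝ) (cc : A → Option F → ℝ) (dc : A → A → ℝ)
    (hfc : ∀ f, 0 ≤ fc f) (hcc0 : ∀ i, cc i none = 0) (hcc : ∀ i o, 0 ≤ cc i o)
    (hdc : ∀ i j, 0 ≤ dc i j) (hsym : ∀ i j, dc i j = dc j i)
    (σ : A → Option F) (hopt : ∀ s, socC fc cc dc σ ≤ socC fc cc dc s) :
    ∀ i t, 2 * ct cc dc σ i - cc i (σ i) ≤ 2 * ct cc dc (Function.update σ i t) i := by
  intro i t
  have main : ∀ t' : Option F, (∀ g : F, t' = some g → ∃ j, σ j = some g) →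
      2 * ct cc dc σ i - cc i (σ i) ≤ 2 * ct cc dc (Function.update σ i t') i := by
    intro t' hopen
    have hfm : fcost fc (Function.update σ i t') ≤ fcost fc σ := by
      apply fcost_mono hfc
      intro g ⟨j, hj⟩
      by_cases hji : j = i
      · subst hji
        rw [Function.update_self] at hj
        exact hopen g hj
      · rw [Function.update_of_ne hji] at hj
        exact ⟨j, hj⟩
    have hod := hopt (Function.update σ i t')
    have hsu := soc_update_eq (cc := cc) hsym σ i t'
    have hexp : socC fc cc dc (Function.update σ i t')
        = fcost fc (Function.update σ i t') + soc cc dc (Function.update σ i t') := rfl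
    have hexp2 : socC fc cc dc σ = fcost fc σ + soc cc dc σ := rfl
    -- from optimality: 0 ≤ Δfcost + Δcc + 2Δdis ≤ Δcc + 2Δdis
    have h2d : 0 ≤ (cc i t' - cc i (σ i))
        + 2 * (dis dc (Function.update σ i t') i - dis dc σ i) := by
      rw [hexp, hexp2, hsu] at hod
      linarith
    have hct1 : ct cc dc (Function.update σ i t') i
        = cc i t' + dis dc (Function.update σ i t') i := by
      rw [ct_eq_dis, Function.update_self]
    have hct2 : ct cc dc σ i = cc i (σ i) + dis dc σ i := ct_eq_dis cc dc σ i
    have := hcc i t'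
    linarith
  rcases ht : t with _ | g
  · exact main none (fun g hg => nomatch hg)
  · by_cases hg : ∃ j, σ j = some g
    · exact main (some g) (fun g' hg' => by rw [← Option.some_inj.1 hg']; exact hg)
    · have h1 := main none (fun g hg => nomatch hg)
      have h2 : ct cc dc (Function.update σ i none) i
          ≤ ct cc dc (Function.update σ i (some g)) i := by
        apply ct_update_none_le hcc0 hcc
        intro j _ hj
        exact hg ⟨j, hj⟩
      linarith

-- at a PhiC minimizer, nobody can improve (price-free)
lemma min_ne_all [Fintype A] [Fintype F] [DecidableEq A]
    (fc : F → ℝ) (cc : A → Option F → ℝ) (dc : A → A → ℝ)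
    (hfc : ∀ f, 0 ≤ fc f) (hcc0 : ∀ i, cc i none = 0) (hcc : ∀ i o, 0 ≤ cc i o)
    (hdc : ∀ i j, 0 ≤ dc i j) (hsym : ∀ i j, dc i j = dc j i)
    (sh : A → Option F) (hmin : ∀ x, PhiC fc cc dc sh ≤ PhiC fc cc dc x) :
    ∀ i t, ct cc dc sh i ≤ ct cc dc (Function.update sh i t) i := by
  intro i t
  have main : ∀ t' : Option F, (∀ g : F, t' = some g → ∃ j, sh j = some g) →
      ct cc dc sh i ≤ ct cc dc (Function.update sh i t') i := by
    intro t' hopen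
    have hfm : fcost fc (Function.update sh i t') ≤ fcost fc sh := by
      apply fcost_mono hfc
      intro g ⟨j, hj⟩
      by_cases hji : j = i
      · subst hji; rw [Function.update_self] at hj; exact hopen g hj
      · rw [Function.update_of_ne hji] at hj; exact ⟨j, hj⟩
    have hod := hmin (Function.update sh i t')
    have hpu := Phi0_update_eq (cc := cc) hsym sh i t'
    have hexp : PhiC fc cc dc (Function.update sh i t')
        = fcost fc (Function.update sh i t') + Phi0 cc dc (Function.update sh i t') := rfl
    have hexp2 : PhiC fc cc dc sh = fcost fc sh + Phi0 cc dc sh := rfl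
    rw [hexp, hexp2, hpu] at hod
    linarith
  rcases t with _ | g
  · exact main none (fun g hg => nomatch hg)
  · by_cases hg : ∃ j, sh j = some g
    · exact main (some g) (fun g' hg' => by rw [← Option.some_inj.1 hg']; exact hg)
    · have h1 := main none (fun g hg => nomatch hg)
      have h2 : ct cc dc (Function.update sh i none) i
          ≤ ct cc dc (Function.update sh i (some g)) i :=
        ct_update_none_le hcc0 hcc (fun j _ hj => hg ⟨j, hj⟩)
      linarith

-- Lemma A: a PhiC-minimizing state can be stabilized
lemma exists_stable [Fintype A] [Fintype F] [DecidableEq A]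
    (fc : F → ℝ) (cc : A → Option F → ℝ) (dc : A → A → ℝ)
    (hfc : ∀ f, 0 ≤ fc f) (hcc0 : ∀ i, cc i none = 0) (hcc : ∀ i o, 0 ≤ cc i o)
    (hdc : ∀ i j, 0 ≤ dc i j) (hsym : ∀ i j, dc i j = dc j i) :
    ∃ s γ, Stable fc cc dc s γ ∧ ∀ x, PhiC fc cc dc s ≤ PhiC fc cc dc x := by
  classical
  obtain ⟨sh, -, hmin0⟩ := Finset.exists_min_image (univ : Finset (A → Option F))
    (PhiC fc cc dc) ⟨fun _ => none, Finset.mem_univ _⟩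
  have hmin : ∀ x, PhiC fc cc dc sh ≤ PhiC fc cc dc x := fun x => hmin0 x (Finset.mem_univ x)
  have hne := min_ne_all fc cc dc hfc hcc0 hcc hdc hsym sh hmin
  -- target sets and gaps
  set Tgt : A → Finset (Option F) := fun i =>
    univ.filter (fun t => t ≠ sh i ∧
      (t = none ∨ ∃ g, t = some g ∧ ∃ j, j ≠ i ∧ sh j = some g)) with hTgt
  set q : A → ℝ := fun i =>
    if h : (Tgt i).Nonempty then
      ((Tgt i).inf' h fun t => ct cc dc (Function.update sh i t) i) - ct cc dc sh i
    else 0 with hqdef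
  have hq0 : ∀ i, 0 ≤ q i := by
    intro i
    rw [hqdef]
    dsimp only
    split_ifs with h
    · obtain ⟨t0, _, he⟩ := Finset.exists_mem_eq_inf' h (fun t => ct cc dc (Function.update sh i t) i)
      rw [he]
      have := hne i t0
      linarith
    · exact le_rfl
  have hqle : ∀ i t, t ∈ Tgt i → q i ≤ ct cc dc (Function.update sh i t) i - ct cc dc sh i := by
    intro i t ht
    have hne' : (Tgt i).Nonempty := ⟨t, ht⟩
    rw [hqdef]
    dsimp only
    rw [dif_pos hne']
    have := Finset.inf'_le (fun t => ct cc dc (Function.update sh i t) i) ht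
    linarith
  have hnonemem : ∀ i (f : F), sh i = some f → (none : Option F) ∈ Tgt i := by
    intro i f hf
    rw [hTgt]
    refine Finset.mem_filter.2 ⟨Finset.mem_univ _, ?_, Or.inl rfl⟩
    rw [hf]; exact fun h => nomatch h
  have hqall : ∀ i (f : F), sh i = some f → ∀ s', s' ≠ sh i →
      q i ≤ ct cc dc (Function.update sh i s') i - ct cc dc sh i := by
    intro i f hf s' hs'
    by_cases hmem : s' ∈ Tgt i
    · exact hqle i s' hmem
    · rcases s' with _ | g
      · exact absurd (hnonemem i f hf) (by rw [hTgt] at hmem ⊢; exact fun h => hmem h)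
      · have hg : ∀ j, j ≠ i → sh j ≠ some g := by
          intro j hj hcon
          apply hmem
          rw [hTgt]
          exact Finset.mem_filter.2 ⟨Finset.mem_univ _, hs', Or.inr ⟨g, rfl, j, hj, hcon⟩⟩
        have h1 := hqle i none (hnonemem i f hf)
        have h2 := ct_update_none_le (dc := dc) hcc0 hcc hg
        linarith
  -- coverage
  have hcover : ∀ f : F, (∃ i, sh i = some f) →
      fc f ≤ ∑ i ∈ univ.filter (fun i => sh i = some f), q i := by
    intro f hf
    set U := univ.filter (fun i => sh i = some f) with hU
    have htex : ∀ i, ∃ tt : Option F, i ∈ U →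
        tt ∈ Tgt i ∧ ct cc dc (Function.update sh i tt) i - ct cc dc sh i = q i := by
      intro i
      by_cases hi : i ∈ U
      · have hfi : sh i = some f := (Finset.mem_filter.1 hi).2
        have hne2 : (Tgt i).Nonempty := ⟨none, hnonemem i f hfi⟩
        obtain ⟨t0, ht0, he⟩ := Finset.exists_mem_eq_inf' hne2
          (fun t => ct cc dc (Function.update sh i t) i)
        refine ⟨t0, fun _ => ⟨ht0, ?_⟩⟩
        rw [hqdef]
        dsimp only
        rw [dif_pos hne2, ← he]
      · exact ⟨none, fun h => absurd h hi⟩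
    choose t ht using htex
    have hUU : ∀ k ∈ U, ∀ l ∈ U, k ≠ l →
        conn sh k l ∧ ¬ conn (Function.update sh k (t k)) k l := by
      intro k hk l hl hkl
      have hk' : sh k = some f := (Finset.mem_filter.1 hk).2
      have hl' : sh l = some f := (Finset.mem_filter.1 hl).2
      refine ⟨⟨f, hk', hl'⟩, ?_⟩
      rintro ⟨g, hg1, hg2⟩
      rw [Function.update_self] at hg1
      rw [Function.update_of_ne (fun h => hkl h.symm)] at hg2
      have htk := ((ht k hk).1)
      rw [hTgt] at htk
      have hne3 : t k ≠ sh k := (Finset.mem_filter.1 htk).2.1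
      apply hne3
      rw [hg1, hk']
      rw [hl'] at hg2
      exact hg2.symm ▸ rfl
    have hgrp := Phi0_group (cc := cc) hdc hsym sh U t hUU
    have hfc' : fcost fc (fun j => if j ∈ U then t j else sh j) ≤ fcost fc sh - fc f := by
      apply fcost_le_sub hfc hf
      intro g ⟨j, hj⟩
      by_cases hjU : j ∈ U
      · rw [if_pos hjU] at hj
        have htj := (ht j hjU).1
        rw [hTgt] at htj
        obtain ⟨-, hne4, hor⟩ := Finset.mem_filter.1 htj
        rcases hor with h0 | ⟨g', hg', j', hj', hshj'⟩
        · rw [hj] at h0; exact nomatch h0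
        · rw [hj] at hg'
          have : g' = g := Option.some_inj.1 hg'.symm
          subst this
          constructor
          · intro hgf
            apply hne4
            rw [hj, hgf, (Finset.mem_filter.1 hjU).2]
          · exact ⟨j', hshj'⟩
      · rw [if_neg hjU] at hj
        constructor
        · intro hgf
          apply hjU
          rw [hU]
          exact Finset.mem_filter.2 ⟨Finset.mem_univ _, by rw [hj, hgf]⟩
        · exact ⟨j, hj⟩
    have h0 := hmin (fun j => if j ∈ U then t j else sh j)
    have hsum : ∑ k ∈ U, (ct cc dc (Function.update sh k (t k)) k - ct cc dc sh k)
        = ∑ k ∈ U, q k := Finset.sum_congr rfl fun k hk => (ht k hk).2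
    have hexp : PhiC fc cc dc (fun j => if j ∈ U then t j else sh j)
        = fcost fc (fun j => if j ∈ U then t j else sh j)
          + Phi0 cc dc (fun j => if j ∈ U then t j else sh j) := rfl
    have hexp2 : PhiC fc cc dc sh = fcost fc sh + Phi0 cc dc sh := rfl
    rw [hexp, hexp2] at h0
    rw [hsum] at hgrp
    linarith
  -- prices
  set G : F → ℝ := fun f => ∑ i ∈ univ.filter (fun i => sh i = some f), q i with hG
  set γ : A → ℝ := fun i => (sh i).elim 0 (fun f => fc f * q i / G f) with hγ
  have hγnone : ∀ i, sh i = none → γ i = 0 := by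
    intro i hi
    rw [hγ]
    dsimp only
    rw [hi]
    rfl
  have hγsome : ∀ i (f : F), sh i = some f → γ i = fc f * q i / G f := by
    intro i f hi
    rw [hγ]
    dsimp only
    rw [hi]
    rfl
  have hGnonneg : ∀ f, 0 ≤ G f := fun f => Finset.sum_nonneg fun i _ => hq0 i
  refine ⟨sh, γ, ⟨?_, ?_, ?_, ?_⟩, hmin⟩
  · -- nonneg
    intro i
    rcases hsi : sh i with _ | f
    · rw [hγnone i hsi]
    · rw [hγsome i f hsi]
      exact div_nonneg (mul_nonneg (hfc f) (hq0 i)) (hGnonneg f)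
  · exact hγnone
  · -- budget balance
    intro f hf
    have hterm : ∀ i ∈ univ.filter (fun i => sh i = some f), γ i = fc f * q i / G f :=
      fun i hi => hγsome i f (Finset.mem_filter.1 hi).2
    rw [Finset.sum_congr rfl hterm]
    by_cases hG0 : G f = 0
    · have hfc0 : fc f = 0 := by
        have h1 : fc f ≤ (0 : ℝ) := le_trans (hcover f hf) (le_of_eq hG0)
        exact le_antisymm h1 (hfc f)
      simp [hfc0]
    · have : ∑ i ∈ univ.filter (fun i => sh i = some f), fc f * q i / G f
          = (fc f / G f) * ∑ i ∈ univ.filter (fun i => sh i = some f), q i := by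
        rw [Finset.mul_sum]
        exact Finset.sum_congr rfl fun i _ => by ring
      rw [this]
      show fc f / G f * G f = fc f
      field_simp
  · -- no beneficial deviation
    intro i s' hs'
    rcases hsi : sh i with _ | f
    · rw [hγnone i hsi, add_zero]
      exact hne i s'
    · have hγle : γ i ≤ q i := by
        rw [hγsome i f hsi]
        by_cases hG0 : G f = 0
        · rw [hG0, div_zero]
          exact hq0 i
        · have h1 : fc f ≤ G f := hcover f ⟨i, hsi⟩
          have hGpos : 0 < G f := lt_of_le_of_ne (hGnonneg f) (Ne.symm hG0)
          rw [div_le_iff₀ hGpos]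
          calc fc f * q i ≤ G f * q i := mul_le_mul_of_nonneg_right h1 (hq0 i)
            _ = q i * G f := by ring
      have h2 := hqall i f hsi s' hs'
      linarith


/-- payment-vs-PoS tradeoff: for every instance,
`Δ/c(s*) ≤ 1 − (2/5)·PoS`, where `s*` minimizes social cost, `b i` is a best response
of agent `i` against `s*_{-i}`, `Δ = Σ_i (c̃_i(s*) − c̃_i(b_i, s*_{-i}))` is the total
payment needed to stabilize `s*`, and `PoS` is the infimum of `c(ŝ)/c(s*)` over all
stable states `(ŝ, γ)`. -/
theorem payment_vs_pos_tradeoff [Fintype A] [Fintype F] [DecidableEq A]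
    (fc : F → ℝ) (cc : A → Option F → ℝ) (dc : A → A → ℝ)
    (hfc : ∀ f, 0 ≤ fc f) (hcc0 : ∀ i, cc i none = 0) (hcc : ∀ i o, 0 ≤ cc i o)
    (hdc : ∀ i j, 0 ≤ dc i j) (hsym : ∀ i j, dc i j = dc j i)
    (sstar : A → Option F) (hopt : ∀ s, socC fc cc dc sstar ≤ socC fc cc dc s)
    (b : A → Option F)
    (hb : ∀ i s', ct cc dc (Function.update sstar i (b i)) i
      ≤ ct cc dc (Function.update sstar i s') i) :
    (∑ i, (ct cc dc sstar i - ct cc dc (Function.update sstar i (b i)) i))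
        / socC fc cc dc sstar
      ≤ 1 - (2 / 5) * sInf {r : ℝ | ∃ s γ, Stable fc cc dc s γ ∧
          r = socC fc cc dc s / socC fc cc dc sstar} := by
  classical
  obtain ⟨sh, γ0, hstab, hminsh⟩ := exists_stable fc cc dc hfc hcc0 hcc hdc hsym
  -- normalized best responses
  set b' : A → Option F := fun i => if ∃ j, sstar j = b i then b i else none with hb'
  have hb'br : ∀ i t, ct cc dc (Function.update sstar i (b' i)) i
      ≤ ct cc dc (Function.update sstar i t) i := by
    intro i t
    rw [hb']
    dsimp only
    split_ifs with h
    · exact hb i t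
    · rcases hbi : b i with _ | g
      · have := hb i t
        rwa [hbi] at this
      · have hg : ∀ j, j ≠ i → sstar j ≠ some g := fun j _ hj => h ⟨j, by rw [hj, ← hbi]⟩
        calc ct cc dc (Function.update sstar i none) i
            ≤ ct cc dc (Function.update sstar i (some g)) i :=
              ct_update_none_le hcc0 hcc hg
          _ = ct cc dc (Function.update sstar i (b i)) i := by rw [hbi]
          _ ≤ ct cc dc (Function.update sstar i t) i := hb i t
  have hb'open : ∀ g : F, (∃ i, b' i = some g) → ∃ j, sstar j = some g := by
    rintro g ⟨i, hi⟩
    rw [hb'] at hi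
    dsimp only at hi
    by_cases h : ∃ j, sstar j = b i
    · rw [if_pos h] at hi; rwa [hi] at h
    · rw [if_neg h] at hi; exact nomatch hi
  -- quantities
  set Bv : ℝ := ∑ i, ct cc dc (Function.update sstar i (b' i)) i with hBv
  set Fv : ℝ := fcost fc sstar with hFv
  set Hv : ℝ := (1 / 2) * ∑ i, dis dc sstar i with hHv
  set Cv : ℝ := ∑ i, cc i (sstar i) with hCv
  have hFv0 : 0 ≤ Fv := fcost_nonneg hfc sstar
  have hBv0 : 0 ≤ Bv := Finset.sum_nonneg fun i _ => ct_nonneg hcc hdc _ i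
  have hHv0 : 0 ≤ Hv := by
    rw [hHv]
    have : 0 ≤ ∑ i, dis dc sstar i := Finset.sum_nonneg fun i _ => dis_nonneg hdc sstar i
    linarith
  -- 2·Bv ≥ Cv + 4·Hv
  have hB2 : Cv + 4 * Hv ≤ 2 * Bv := by
    have h1 : ∀ i, 2 * ct cc dc sstar i - cc i (sstar i)
        ≤ 2 * ct cc dc (Function.update sstar i (b' i)) i :=
      fun i => opt_agent fc cc dc hfc hcc0 hcc hdc hsym sstar hopt i (b' i)
    have h2 : ∑ i, (2 * ct cc dc sstar i - cc i (sstar i))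
        ≤ ∑ i, 2 * ct cc dc (Function.update sstar i (b' i)) i :=
      Finset.sum_le_sum fun i _ => h1 i
    have h3 : ∑ i, (2 * ct cc dc sstar i - cc i (sstar i))
        = 2 * ∑ i, ct cc dc sstar i - Cv := by
      rw [Finset.sum_sub_distrib, ← Finset.mul_sum, hCv]
    have h4 : ∑ i, 2 * ct cc dc (Function.update sstar i (b' i)) i = 2 * Bv := by
      rw [← Finset.mul_sum, hBv]
    have h5 : ∑ i, ct cc dc sstar i = Cv + 2 * Hv := by
      have := soc_eq_sum_ct cc dc sstar
      rw [soc_eq_dis] at this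
      rw [hCv, hHv]
      linarith
    rw [h3, h4, h5] at h2
    linarith
  -- a candidate with small potential
  have hcand : ∃ x, PhiC fc cc dc x ≤ (5 / 4) * (Fv + Bv) := by
    by_cases hH : Hv ≤ (Fv + Bv) / 4
    · refine ⟨b', ?_⟩
      have hfcb : fcost fc b' ≤ Fv := fcost_mono hfc hb'open
      have hd := sum_dis_bstate hdc hsym sstar b'
      have hBsplit : Bv = ∑ i, cc i (b' i) + ∑ i, dis dc (Function.update sstar i (b' i)) i := by
        rw [hBv, ← Finset.sum_add_distrib]
        refine Finset.sum_congr rfl fun i _ => ?_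
        rw [ct_eq_dis, Function.update_self]
      have hphi : Phi0 cc dc b' ≤ Bv + Hv := by
        rw [Phi0_eq_dis, hBsplit, hHv]
        linarith
      have hPhiC : PhiC fc cc dc b' = fcost fc b' + Phi0 cc dc b' := rfl
      rw [hPhiC]
      linarith
    · refine ⟨sstar, ?_⟩
      have hPs : PhiC fc cc dc sstar = Fv + Cv + Hv := by
        have : PhiC fc cc dc sstar = fcost fc sstar + Phi0 cc dc sstar := rfl
        rw [this, Phi0_eq_dis, hFv, hCv, hHv]
        ring
      push_neg at hH
      rw [hPs]
      linarith
  obtain ⟨x, hx⟩ := hcand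
  -- stable state cost bound
  have hsoc2 : socC fc cc dc sh ≤ 2 * PhiC fc cc dc sh := socC_le_two_phiC hfc hcc sh
  have hssh : socC fc cc dc sh ≤ (5 / 2) * (Fv + Bv) := by
    have := hminsh x
    linarith
  -- relate to Δ
  have hrel : Fv + Bv ≤ socC fc cc dc sstar
      - ∑ i, (ct cc dc sstar i - ct cc dc (Function.update sstar i (b i)) i) := by
    have h2 : Bv ≤ ∑ i, ct cc dc (Function.update sstar i (b i)) i :=
      Finset.sum_le_sum fun i _ => hb'br i (b i)
    have h3 : socC fc cc dc sstar = Fv + ∑ i, ct cc dc sstar i := by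
      have : socC fc cc dc sstar = fcost fc sstar + soc cc dc sstar := rfl
      rw [this, soc_eq_sum_ct, hFv]
    have h4 : ∑ i, (ct cc dc sstar i - ct cc dc (Function.update sstar i (b i)) i)
        = ∑ i, ct cc dc sstar i - ∑ i, ct cc dc (Function.update sstar i (b i)) i :=
      Finset.sum_sub_distrib _ _
    rw [h3, h4]
    linarith
  have hfinal : socC fc cc dc sh ≤ (5 / 2) * (socC fc cc dc sstar
      - ∑ i, (ct cc dc sstar i - ct cc dc (Function.update sstar i (b i)) i)) := by
    nlinarith [hssh, hrel]
  -- conclude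
  set Δv : ℝ := ∑ i, (ct cc dc sstar i - ct cc dc (Function.update sstar i (b i)) i) with hΔv
  set cstar : ℝ := socC fc cc dc sstar with hcstar
  have hc0 : 0 ≤ cstar := socC_nonneg hfc hcc hdc sstar
  have hmem : (socC fc cc dc sh / cstar)
      ∈ {r : ℝ | ∃ s γ, Stable fc cc dc s γ ∧ r = socC fc cc dc s / cstar} :=
    ⟨sh, γ0, hstab, rfl⟩
  by_cases hz : cstar = 0
  · have hSeq : {r : ℝ | ∃ s γ, Stable fc cc dc s γ ∧
        r = socC fc cc dc s / cstar} = {(0 : ℝ)} := by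
      ext r
      simp only [Set.mem_setOf_eq, Set.mem_singleton_iff]
      constructor
      · rintro ⟨s, γ', -, rfl⟩
        rw [hz, div_zero]
      · rintro rfl
        exact ⟨sh, γ0, hstab, by rw [hz, div_zero]⟩
    rw [hSeq, csInf_singleton, hz, div_zero]
    norm_num
  · have hpos : 0 < cstar := lt_of_le_of_ne hc0 (Ne.symm hz)
    have hbdd : BddBelow {r : ℝ | ∃ s γ, Stable fc cc dc s γ ∧
        r = socC fc cc dc s / cstar} := by
      refine ⟨0, fun r hr => ?_⟩
      obtain ⟨s, γ', -, rfl⟩ := hr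
      exact div_nonneg (socC_nonneg hfc hcc hdc s) hc0
    have h1 : sInf {r : ℝ | ∃ s γ, Stable fc cc dc s γ ∧
        r = socC fc cc dc s / cstar} ≤ socC fc cc dc sh / cstar :=
      csInf_le hbdd hmem
    have h2 : socC fc cc dc sh / cstar ≤ ((5 / 2) * (cstar - Δv)) / cstar :=
      (div_le_div_iff_of_pos_right hpos).2 hfinal
    have hne0 : cstar ≠ 0 := hz
    have hkey : (2 / 5 : ℝ) * (((5 / 2) * (cstar - Δv)) / cstar) = 1 - Δv / cstar := by
      field_simp
    have h3 : (2 / 5 : ℝ) * sInf {r : ℝ | ∃ s γ, Stable fc cc dc s γ ∧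
        r = socC fc cc dc s / cstar}
        ≤ (2 / 5 : ℝ) * (((5 / 2) * (cstar - Δv)) / cstar) := by
      apply mul_le_mul_of_nonneg_left (le_trans h1 h2)
      norm_num
    rw [hkey] at h3
    linarith
end
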